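/- Let r ≥ 1 and let P be a polynomial in r variables with rational coefficients. Define F ∈ ℚ[[q]] to be the formal power series whose coefficient of q^m is the (finite) sum of P(λ_1, …, λ_r) over all weakly decreasing tuples of natural numbers λ_1 ≥ ⋯ ≥ λ_r ≥ 0 with λ_1 + ⋯ + λ_r = m. Then F is rational: there exist polynomials A, B ∈ ℚ[q] with B(0) ≠ 0 such that B · F = A in ℚ[[q]]. -/

import Mathlib

open PowerSeries Finset

namespace PartitionRat

def IsRat (F : PowerSeries ℚ) : Prop :=
  ∃ A B : Polynomial ℚ, B.coeff 0 ≠ 0 ∧ (B : PowerSeries ℚ) * F = (A : PowerSeries ℚ)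

lemma isRat_poly (A : Polynomial ℚ) : IsRat A := ⟨A, 1, by simp, by simp⟩

lemma isRat_one : IsRat 1 := by simpa using isRat_poly 1

lemma isRat_zero : IsRat 0 := by simpa using isRat_poly 0

lemma IsRat.add {F G} (hF : IsRat F) (hG : IsRat G) : IsRat (F + G) := by
  obtain ⟨A1, B1, h1, e1⟩ := hF
  obtain ⟨A2, B2, h2, e2⟩ := hG
  refine ⟨B2 * A1 + B1 * A2, B1 * B2, by simp [Polynomial.mul_coeff_zero, h1, h2], ?_⟩
  have h : (B1 : PowerSeries ℚ) * B2 * (F + G)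
      = (B2 : PowerSeries ℚ) * ((B1 : PowerSeries ℚ) * F)
        + (B1 : PowerSeries ℚ) * ((B2 : PowerSeries ℚ) * G) := by ring
  push_cast
  rw [h, e1, e2]

lemma IsRat.mul {F G} (hF : IsRat F) (hG : IsRat G) : IsRat (F * G) := by
  obtain ⟨A1, B1, h1, e1⟩ := hF
  obtain ⟨A2, B2, h2, e2⟩ := hG
  refine ⟨A1 * A2, B1 * B2, by simp [Polynomial.mul_coeff_zero, h1, h2], ?_⟩
  have h : (B1 : PowerSeries ℚ) * B2 * (F * G)
      = ((B1 : PowerSeries ℚ) * F) * ((B2 : PowerSeries ℚ) * G) := by ring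
  push_cast
  rw [h, e1, e2]

lemma IsRat.C_mul {F} (hF : IsRat F) (c : ℚ) : IsRat (PowerSeries.C c * F) := by
  have : (PowerSeries.C c : PowerSeries ℚ) = ((Polynomial.C c : Polynomial ℚ) : PowerSeries ℚ) := by
    simp
  rw [this]
  exact (isRat_poly _).mul hF

lemma isRat_sum {ι : Type*} (s : Finset ι) (f : ι → PowerSeries ℚ)
    (h : ∀ i ∈ s, IsRat (f i)) : IsRat (∑ i ∈ s, f i) := by
  classical
  induction s using Finset.induction_on with
  | empty => simpa using isRat_zero
  | insert _ _ hx ih =>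
    rw [Finset.sum_insert hx]
    exact (h _ (Finset.mem_insert_self _ _)).add
      (ih fun i hi => h i (Finset.mem_insert_of_mem hi))

lemma isRat_prod {ι : Type*} (s : Finset ι) (f : ι → PowerSeries ℚ)
    (h : ∀ i ∈ s, IsRat (f i)) : IsRat (∏ i ∈ s, f i) := by
  classical
  induction s using Finset.induction_on with
  | empty => simpa using isRat_one
  | insert _ _ hx ih =>
    rw [Finset.prod_insert hx]
    exact (h _ (Finset.mem_insert_self _ _)).mul
      (ih fun i hi => h i (Finset.mem_insert_of_mem hi))

def T (w e : ℕ) : PowerSeries ℚ :=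
  PowerSeries.mk fun m => if w ∣ m then ((m / w : ℕ) : ℚ) ^ e else 0

lemma coeff0_one_sub_X_pow (w : ℕ) (hw : 0 < w) :
    ((1 - Polynomial.X ^ w : Polynomial ℚ)).coeff 0 = 1 := by
  simp only [Polynomial.coeff_sub, Polynomial.coeff_one, Polynomial.coeff_X_pow]
  have : ¬ (0 = w) := fun h => hw.ne' h.symm
  simp [this]

lemma coe_one_sub_X_pow (w : ℕ) :
    ((1 - Polynomial.X ^ w : Polynomial ℚ) : PowerSeries ℚ)
      = 1 - (PowerSeries.X : PowerSeries ℚ) ^ w := by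
  push_cast
  rfl

lemma one_sub_X_pow_mul_T_zero (w : ℕ) (hw : 0 < w) :
    (1 - (PowerSeries.X : PowerSeries ℚ) ^ w) * T w 0 = 1 := by
  ext m
  simp only [sub_mul, one_mul, map_sub, PowerSeries.coeff_X_pow_mul', T,
    PowerSeries.coeff_mk, PowerSeries.coeff_one, pow_zero]
  by_cases hm : m = 0
  · subst hm; simp [Nat.not_le.mpr hw]
  · simp only [if_neg hm]
    by_cases hd : w ∣ m
    · have hle : w ≤ m := Nat.le_of_dvd (Nat.pos_of_ne_zero hm) hd
      have hd2 : w ∣ m - w := (Nat.dvd_sub hd dvd_rfl)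
      simp [hd, hle, hd2]
    · have hd2 : ¬ (w ∣ m - w) ∨ ¬ w ≤ m := by
        by_cases hle : w ≤ m
        · left; intro h; exact hd (by
            obtain ⟨c, hc⟩ := h
            exact ⟨c + 1, by rw [Nat.mul_add, Nat.mul_one]; omega⟩)
        · right; exact hle
      rcases hd2 with h | h
      · by_cases hle : w ≤ m <;> simp [hd, hle, h]
      · simp [hd, h]

lemma one_sub_X_pow_mul_T (w : ℕ) (hw : 0 < w) (e : ℕ) (he : 0 < e) :
    (1 - (PowerSeries.X : PowerSeries ℚ) ^ w) * T w e + PowerSeries.C (-(-1 : ℚ) ^ e)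
      = ∑ k ∈ range e, PowerSeries.C (-((-1 : ℚ) ^ (k + e) * (e.choose k : ℚ))) * T w k := by
  ext m
  simp only [map_add, map_sum, PowerSeries.coeff_C_mul, sub_mul, one_mul, map_sub,
    PowerSeries.coeff_X_pow_mul', T, PowerSeries.coeff_mk, PowerSeries.coeff_C]
  by_cases hd : w ∣ m
  · obtain ⟨n, rfl⟩ := hd
    have h1 : (w * n / w : ℕ) = n := Nat.mul_div_cancel_left _ hw
    by_cases hn : n = 0
    · subst hn
      simp only [mul_zero, Nat.zero_div, Nat.cast_zero, zero_pow he.ne', dvd_zero, if_true,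
        if_neg (Nat.not_le.mpr hw), if_pos rfl, sub_zero, zero_add]
      rw [Finset.sum_eq_single 0]
      · simp
      · intro b _ hb; simp [zero_pow hb]
      · intro h; exact absurd (Finset.mem_range.mpr he) h
    · have hwm : w ≤ w * n := Nat.le_mul_of_pos_right _ (Nat.pos_of_ne_zero hn)
      have hd2 : w ∣ w * n - w := ⟨n - 1, by rw [Nat.mul_sub_one]⟩
      have h2 : ((w * n - w) / w : ℕ) = n - 1 := by
        rw [show w * n - w = w * (n - 1) by rw [Nat.mul_sub_one],
          Nat.mul_div_cancel_left _ hw]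
      have hm0 : ¬ (w * n = 0) := by positivity
      simp only [if_pos hwm, dvd_mul_right, if_true, if_pos hd2, if_neg hm0, h1, h2]
      have hcast : ((n - 1 : ℕ) : ℚ) = (n : ℚ) - 1 := by
        have := Nat.one_le_iff_ne_zero.mpr hn
        push_cast [this]; ring
      rw [hcast, sub_pow (n : ℚ) 1 e, Finset.sum_range_succ]
      have hpow : ((-1 : ℚ)) ^ (e + e) = 1 := by
        rw [← two_mul, pow_mul]; norm_num
      simp only [one_pow, mul_one, Nat.choose_self, Nat.cast_one, hpow]
      have hS : ∑ x ∈ range e, -((-1:ℚ)^(x+e) * (e.choose x : ℚ)) * (n:ℚ)^x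
          = -∑ x ∈ range e, (-1:ℚ)^(x+e) * (n:ℚ)^x * (e.choose x : ℚ) := by
        rw [← Finset.sum_neg_distrib]; exact Finset.sum_congr rfl fun x _ => by ring
      rw [hS]; ring
  · have hm : m ≠ 0 := fun h => hd (h ▸ dvd_zero w)
    have hd2 : (if w ≤ m then (if w ∣ m - w then (((m - w) / w : ℕ) : ℚ) ^ e else 0) else 0)
        = 0 := by
      split_ifs with hle hdvd
      · obtain ⟨c, hc⟩ := hdvd
        exact absurd ⟨c + 1, by rw [Nat.mul_add, Nat.mul_one]; omega⟩ hd
      · rfl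
      · rfl
    simp [hd, hm, hd2]
    intro h1 h2
    obtain rfl : m = w := le_antisymm h2 h1
    exact absurd dvd_rfl hd

lemma isRat_T (w : ℕ) (hw : 0 < w) (e : ℕ) : IsRat (T w e) := by
  induction e using Nat.strong_induction_on with
  | _ e ih =>
    rcases Nat.eq_zero_or_pos e with rfl | he
    · exact ⟨1, 1 - Polynomial.X ^ w, by rw [coeff0_one_sub_X_pow w hw]; norm_num,
        by rw [coe_one_sub_X_pow, one_sub_X_pow_mul_T_zero w hw]; simp⟩
    · have hRHS : IsRat (∑ k ∈ range e,
          PowerSeries.C (-((-1 : ℚ) ^ (k + e) * (e.choose k : ℚ))) * T w k) :=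
        isRat_sum _ _ fun k hk => (ih k (Finset.mem_range.mp hk)).C_mul _
      obtain ⟨A, B, hB, hAB⟩ := hRHS
      refine ⟨A - B * Polynomial.C (-(-1 : ℚ) ^ e), B * (1 - Polynomial.X ^ w),
        by simp [Polynomial.mul_coeff_zero, hB, coeff0_one_sub_X_pow w hw], ?_⟩
      push_cast [coe_one_sub_X_pow]
      have key := one_sub_X_pow_mul_T w hw e he
      have : (B : PowerSeries ℚ) * ((1 - (PowerSeries.X : PowerSeries ℚ) ^ w) * T w e)
          = (B : PowerSeries ℚ) * (∑ k ∈ range e,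
              PowerSeries.C (-((-1 : ℚ) ^ (k + e) * (e.choose k : ℚ))) * T w k)
            - (B : PowerSeries ℚ) * PowerSeries.C (-(-1 : ℚ) ^ e) := by
        rw [← key]; ring
      rw [mul_assoc, this, hAB]

def Dset (n : ℕ) (w : Fin n → ℕ) (m : ℕ) : Finset (Fin n → ℕ) :=
  (Fintype.piFinset fun _ => Finset.range (m + 1)).filter fun d => ∑ i, w i * d i = m

lemma mem_Dset {n : ℕ} {w : Fin n → ℕ} (hw : ∀ i, 0 < w i) {m : ℕ} {d : Fin n → ℕ} :
    d ∈ Dset n w m ↔ ∑ i, w i * d i = m := by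
  constructor
  · exact fun h => (Finset.mem_filter.mp h).2
  · intro h
    refine Finset.mem_filter.mpr ⟨Fintype.mem_piFinset.mpr fun i => ?_, h⟩
    rw [Finset.mem_range]
    have h1 : d i ≤ w i * d i := Nat.le_mul_of_pos_left _ (hw i)
    have h2 : w i * d i ≤ ∑ j, w j * d j :=
      Finset.single_le_sum (f := fun j => w j * d j) (fun j _ => Nat.zero_le _) (Finset.mem_univ i)
    omega

lemma prod_T (n : ℕ) (w e : Fin n → ℕ) (hw : ∀ i, 0 < w i) :
    (∏ i : Fin n, T (w i) (e i))
      = PowerSeries.mk fun m => ∑ d ∈ Dset n w m, ∏ i, ((d i : ℚ)) ^ (e i) := by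
  classical
  ext m
  rw [PowerSeries.coeff_mk, PowerSeries.coeff_prod]
  have step1 : ∀ l ∈ finsuppAntidiag (Finset.univ : Finset (Fin n)) m,
      (∏ i, (PowerSeries.coeff (l i)) (T (w i) (e i)))
        = if ∀ i, w i ∣ l i then ∏ i, (((l i / w i : ℕ) : ℚ)) ^ (e i) else 0 := by
    intro l _
    by_cases h : ∀ i, w i ∣ l i
    · rw [if_pos h]
      exact Finset.prod_congr rfl fun i _ => by
        simp [T, PowerSeries.coeff_mk, h i]
    · rw [if_neg h]
      push_neg at h
      obtain ⟨i0, hi0⟩ := h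
      exact Finset.prod_eq_zero (Finset.mem_univ i0) (by
        simp [T, PowerSeries.coeff_mk, hi0])
  rw [Finset.sum_congr rfl step1, ← Finset.sum_filter]
  refine Finset.sum_nbij' (i := fun l i => l i / w i)
    (j := fun d => Finsupp.equivFunOnFinite.symm fun i => w i * d i) ?_ ?_ ?_ ?_ ?_
  · intro l hl
    rw [Finset.mem_filter, Finset.mem_finsuppAntidiag] at hl
    obtain ⟨⟨hsum, -⟩, hdvd⟩ := hl
    refine (mem_Dset hw).mpr ?_
    rw [← hsum]
    exact Finset.sum_congr rfl fun i _ => Nat.mul_div_cancel' (hdvd i)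
  · intro d hd
    rw [mem_Dset hw] at hd
    rw [Finset.mem_filter, Finset.mem_finsuppAntidiag]
    refine ⟨⟨?_, Finset.subset_univ _⟩, fun i => by simp⟩
    simpa using hd
  · intro l hl
    rw [Finset.mem_filter] at hl
    ext i
    simp [Nat.mul_div_cancel' (hl.2 i)]
  · intro d hd
    funext i
    simp [Nat.mul_div_cancel_left _ (hw i)]
  · intro l hl
    rfl


variable {r : ℕ}

/-- partial-sum map: `phi d i = ∑_{j ≥ i} d j`. -/
def phi (d : Fin r → ℕ) (i : Fin r) : ℕ := ∑ j ∈ Finset.univ.filter fun j => i ≤ j, d j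

/-- difference map. -/
def psi (lam : Fin r → ℕ) (i : Fin r) : ℕ :=
  if h : (i : ℕ) + 1 < r then lam i - lam ⟨(i : ℕ) + 1, h⟩ else lam i

lemma phi_antitone (d : Fin r → ℕ) : Antitone (phi d) := by
  intro i j hij
  apply Finset.sum_le_sum_of_subset
  intro k hk
  simp only [Finset.mem_filter, Finset.mem_univ, true_and] at hk ⊢
  exact le_trans hij hk

lemma phi_succ (d : Fin r → ℕ) (i : Fin r) (h : (i : ℕ) + 1 < r) :
    phi d i = d i + phi d ⟨(i : ℕ) + 1, h⟩ := by
  unfold phi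
  have hsplit : (Finset.univ.filter fun j => i ≤ j)
      = insert i (Finset.univ.filter fun j : Fin r => (⟨(i : ℕ) + 1, h⟩ : Fin r) ≤ j) := by
    ext k
    simp only [Finset.mem_filter, Finset.mem_univ, true_and, Finset.mem_insert]
    constructor
    · intro hk
      rcases eq_or_lt_of_le hk with h1 | h1
      · exact Or.inl h1.symm
      · right; rw [Fin.le_def, Fin.val_mk]; rw [Fin.lt_def] at h1; omega
    · rintro (rfl | hk)
      · exact le_refl _
      · rw [Fin.le_def, Fin.val_mk] at hk; rw [Fin.le_def]; omega
  rw [hsplit, Finset.sum_insert (by simp [Fin.le_def])]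

lemma phi_last (d : Fin r → ℕ) (i : Fin r) (h : ¬ (i : ℕ) + 1 < r) :
    phi d i = d i := by
  unfold phi
  have : (Finset.univ.filter fun j => i ≤ j) = {i} := by
    ext k
    simp only [Finset.mem_filter, Finset.mem_univ, true_and, Finset.mem_singleton]
    rw [Fin.le_def]
    have := k.isLt
    have := i.isLt
    constructor
    · intro hk; apply Fin.ext; omega
    · rintro rfl; omega
  rw [this, Finset.sum_singleton]

lemma psi_phi (d : Fin r → ℕ) : psi (phi d) = d := by
  funext i
  unfold psi
  split_ifs with h
  · rw [phi_succ d i h]; omega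
  · exact phi_last d i h

lemma phi_psi {lam : Fin r → ℕ} (hlam : Antitone lam) : phi (psi lam) = lam := by
  funext i
  suffices H : ∀ k (i : Fin r), r - 1 - (i : ℕ) = k → phi (psi lam) i = lam i from
    H (r - 1 - (i : ℕ)) i rfl
  intro k
  induction k with
  | zero =>
    intro i hi
    have h : ¬ (i : ℕ) + 1 < r := by have := i.isLt; omega
    rw [phi_last _ i h]
    unfold psi
    rw [dif_neg h]
  | succ k ih =>
    intro i hi
    have h : (i : ℕ) + 1 < r := by have := i.isLt; omega
    rw [phi_succ _ i h, ih ⟨(i : ℕ) + 1, h⟩ (by simp; omega)]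
    show psi lam i + lam _ = lam i
    unfold psi
    rw [dif_pos h]
    have hle : lam ⟨(i : ℕ) + 1, h⟩ ≤ lam i := hlam (by rw [Fin.le_def]; simp)
    omega

lemma sum_phi (d : Fin r → ℕ) : ∑ i, phi d i = ∑ j : Fin r, ((j : ℕ) + 1) * d j := by
  unfold phi
  rw [Finset.sum_comm' (s := Finset.univ) (t := fun i => Finset.univ.filter fun j => i ≤ j)
    (s' := fun j => Finset.univ.filter fun i => i ≤ j) (t' := Finset.univ) (by
      intro i j
      simp only [Finset.mem_filter, Finset.mem_univ, true_and, and_true])]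
  refine Finset.sum_congr rfl fun j _ => ?_
  rw [Finset.sum_const, smul_eq_mul]
  congr 1
  have : (Finset.univ.filter fun i => i ≤ j) = Finset.Iic j := by
    ext k; simp
  rw [this, Fin.card_Iic]



noncomputable def Mser (n : ℕ) (w : Fin n → ℕ) (e : Fin n →₀ ℕ) : PowerSeries ℚ :=
  PowerSeries.mk fun m => ∑ d ∈ Dset n w m, ∏ i, ((d i : ℚ)) ^ (e i)

lemma isRat_Mser {n : ℕ} {w : Fin n → ℕ} (hw : ∀ i, 0 < w i) (e : Fin n →₀ ℕ) :
    IsRat (Mser n w e) := by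
  rw [Mser, ← prod_T n w (fun i => e i) hw]
  exact isRat_prod _ _ fun i _ => isRat_T _ (hw i) _

noncomputable def Aset (r m : ℕ) : Finset (Fin r → ℕ) :=
  @Finset.filter _ (fun lam => Antitone lam ∧ ∑ i, lam i = m) (Classical.decPred _)
    (Fintype.piFinset fun _ => Finset.range (m + 1))

lemma coe_Aset (r m : ℕ) :
    {lam : Fin r → ℕ | Antitone lam ∧ (∑ i, lam i) = m} = ↑(Aset r m) := by
  ext lam
  simp only [Set.mem_setOf_eq, Aset, Finset.coe_filter, Fintype.mem_piFinset,
    Finset.mem_range]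
  constructor
  · intro h
    obtain ⟨h1, h2⟩ := h
    refine ⟨fun i => ?_, h1, h2⟩
    have h3 : lam i ≤ ∑ j, lam j :=
      Finset.single_le_sum (f := lam) (fun j _ => Nat.zero_le _) (Finset.mem_univ i)
    omega
  · exact fun h => h.2

lemma eval_bind₁' {σ τ : Type*} (x : τ → ℚ) (g : σ → MvPolynomial τ ℚ)
    (p : MvPolynomial σ ℚ) :
    MvPolynomial.eval x (MvPolynomial.bind₁ g p)
      = MvPolynomial.eval (fun i => MvPolynomial.eval x (g i)) p :=
  MvPolynomial.eval₂Hom_bind₁ (RingHom.id ℚ) x g p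

end PartitionRat

open PartitionRat in
/-- Summing a fixed polynomial function of the parts over all partitions (weakly decreasing
tuples) of `m` into at most `r` parts produces a rational generating series in `q`. -/
theorem partition_polynomial_sum_rational {r : ℕ} (hr : 1 ≤ r)
    (P : MvPolynomial (Fin r) ℚ) :
    ∃ A B : Polynomial ℚ, B.coeff 0 ≠ 0 ∧
      (B : PowerSeries ℚ) *
          PowerSeries.mk (fun m =>
            ∑ᶠ lam ∈ {lam : Fin r → ℕ | Antitone lam ∧ (∑ i, lam i) = m},
              MvPolynomial.eval (fun i => (lam i : ℚ)) P) =
        (A : PowerSeries ℚ) := by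
  classical
  set w : Fin r → ℕ := fun i => (i : ℕ) + 1 with hw_def
  have hw : ∀ i, 0 < w i := fun i => Nat.succ_pos _
  set Q : MvPolynomial (Fin r) ℚ :=
    MvPolynomial.bind₁
      (fun i => ∑ j ∈ Finset.univ.filter fun j => i ≤ j, MvPolynomial.X j) P with hQ
  have hF : PowerSeries.mk (fun m =>
        ∑ᶠ lam ∈ {lam : Fin r → ℕ | Antitone lam ∧ (∑ i, lam i) = m},
          MvPolynomial.eval (fun i => (lam i : ℚ)) P)
      = ∑ e ∈ Q.support, PowerSeries.C (MvPolynomial.coeff e Q) * Mser r w e := by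
    ext m
    rw [PowerSeries.coeff_mk, coe_Aset r m, finsum_mem_coe_finset]
    -- step 2 : change variables lam = phi d
    have step2 : ∑ lam ∈ Aset r m, MvPolynomial.eval (fun i => ((lam i : ℕ) : ℚ)) P
        = ∑ d ∈ Dset r w m, MvPolynomial.eval (fun i => ((phi d i : ℕ) : ℚ)) P := by
      refine Finset.sum_nbij' (i := psi) (j := phi) ?_ ?_ ?_ ?_ ?_
      · intro lam hlam
        have hmem := (Set.ext_iff.mp (coe_Aset r m) lam).mpr hlam
        obtain ⟨hanti, hsum⟩ := hmem
        refine (mem_Dset hw).mpr ?_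
        calc (∑ i, w i * psi lam i) = ∑ i, phi (psi lam) i := (sum_phi (psi lam)).symm
        _ = ∑ i, lam i := by rw [phi_psi hanti]
        _ = m := hsum
      · intro d hd
        rw [mem_Dset hw] at hd
        refine (Set.ext_iff.mp (coe_Aset r m) (phi d)).mp ?_
        exact ⟨phi_antitone d, by rw [sum_phi]; exact hd⟩
      · intro lam hlam
        have hmem := (Set.ext_iff.mp (coe_Aset r m) lam).mpr hlam
        exact phi_psi hmem.1
      · intro d hd
        exact psi_phi d
      · intro lam hlam
        have hmem := (Set.ext_iff.mp (coe_Aset r m) lam).mpr hlam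
        rw [phi_psi hmem.1]
    rw [step2]
    -- step 3 : eval (phi d) P = eval d Q
    have step3 : ∀ d : Fin r → ℕ,
        MvPolynomial.eval (fun i => ((phi d i : ℕ) : ℚ)) P
          = MvPolynomial.eval (fun i => ((d i : ℕ) : ℚ)) Q := by
      intro d
      have hfun : (fun i => ((phi d i : ℕ) : ℚ))
          = fun i => MvPolynomial.eval (fun k => ((d k : ℕ) : ℚ))
              (∑ j ∈ Finset.univ.filter fun j => i ≤ j, MvPolynomial.X j) := by
        funext i
        simp [phi, Nat.cast_sum]
      rw [hQ, eval_bind₁', ← hfun]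
    rw [Finset.sum_congr rfl fun d _ => step3 d]
    -- step 4 : expand Q into monomials and swap sums
    rw [Finset.sum_congr rfl fun d _ =>
      MvPolynomial.eval_eq' (fun i => ((d i : ℕ) : ℚ)) Q]
    rw [Finset.sum_comm]
    rw [map_sum]
    refine Finset.sum_congr rfl fun e _ => ?_
    rw [PowerSeries.coeff_C_mul, Mser, PowerSeries.coeff_mk, Finset.mul_sum]
  rw [hF]
  exact isRat_sum _ _ fun e _ => (isRat_Mser hw e).C_mul _
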